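/- Let e ∈ ℝⁿ be a unit vector and R₁, R₂ ∈ O(n) with R₁e = R₂e = e and R₁ ≠ R₂. Define γ₁₂ := 2^{-n} ∫_{S^{n−1}} ( R₁Θ·R₂Θ − n(Θ·e)(Θ·e) ) dθ. Then γ₁₂ = −(ω_n/2ⁿ)·(2/n)·( dim E₋ + Σ_i (1 − cos θ_i) ) < 0, where E₋ is the (−1)-eigenspace of R₂^{-1}R₁ and θ_i ∈ (0,π) are the rotation angles of its 2-dimensional invariant blocks. -/

import Mathlib

open MeasureTheory Metric Matrix

lemma mpT {n : ℕ} (T : EuclideanSpace ℝ (Fin n) ≃ₗᵢ[ℝ] EuclideanSpace ℝ (Fin n)) :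
    MeasurePreserving T volume volume :=
  ((EuclideanSpace.basisFun (Fin n) ℝ).map T).measurePreserving_repr_symm

lemma memsph {n : ℕ} (T : EuclideanSpace ℝ (Fin n) ≃ₗᵢ[ℝ] EuclideanSpace ℝ (Fin n))
    (x : sphere (0 : EuclideanSpace ℝ (Fin n)) 1) :
    T ↑x ∈ sphere (0 : EuclideanSpace ℝ (Fin n)) 1 := by
  have h := x.2
  simp only [mem_sphere_iff_norm, sub_zero] at h ⊢
  simp [h]

/-- sphere self-map induced by a linear isometry equiv -/
noncomputable def sphMap {n : ℕ} (T : EuclideanSpace ℝ (Fin n) ≃ₗᵢ[ℝ] EuclideanSpace ℝ (Fin n)) :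
    sphere (0 : EuclideanSpace ℝ (Fin n)) 1 ≃ₜ sphere (0 : EuclideanSpace ℝ (Fin n)) 1 where
  toFun x := ⟨T ↑x, memsph T x⟩
  invFun x := ⟨T.symm ↑x, memsph T.symm x⟩
  left_inv x := by ext1; simp
  right_inv x := by ext1; simp
  continuous_toFun := Continuous.subtype_mk (T.continuous.comp continuous_subtype_val) _
  continuous_invFun := Continuous.subtype_mk (T.symm.continuous.comp continuous_subtype_val) _

lemma sphMap_apply {n : ℕ} (T : EuclideanSpace ℝ (Fin n) ≃ₗᵢ[ℝ] EuclideanSpace ℝ (Fin n))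
    (x : sphere (0 : EuclideanSpace ℝ (Fin n)) 1) : (sphMap T x : EuclideanSpace ℝ (Fin n)) = T ↑x := rfl

open Pointwise in
lemma sphMap_map_toSphere {n : ℕ} (T : EuclideanSpace ℝ (Fin n) ≃ₗᵢ[ℝ] EuclideanSpace ℝ (Fin n)) :
    Measure.map (sphMap T).toMeasurableEquiv
      (volume : Measure (EuclideanSpace ℝ (Fin n))).toSphere
      = (volume : Measure (EuclideanSpace ℝ (Fin n))).toSphere := by
  ext s hs
  rw [MeasurableEquiv.map_apply, Measure.toSphere_apply' _ hs,
    Measure.toSphere_apply' _ (((sphMap T).toMeasurableEquiv.measurable) hs)]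
  congr 1
  have h1 : ((↑) '' ((sphMap T).toMeasurableEquiv ⁻¹' s) : Set (EuclideanSpace ℝ (Fin n)))
      = ⇑T ⁻¹' ((↑) '' s) := by
    ext x
    constructor
    · rintro ⟨y, hy, rfl⟩
      exact ⟨sphMap T y, hy, rfl⟩
    · rintro ⟨θ, hθ, hθx⟩
      refine ⟨(sphMap T).symm θ, ?_, ?_⟩
      · show sphMap T ((sphMap T).symm θ) ∈ s
        simpa using hθ
      · show (T.symm : EuclideanSpace ℝ (Fin n) → _) ↑θ = x
        rw [hθx]; simp
  rw [h1]
  have h2 : (Set.Ioo (0:ℝ) 1) • (⇑T ⁻¹' ((↑) '' s)) = ⇑T ⁻¹' ((Set.Ioo (0:ℝ) 1) • ((↑) '' s)) := by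
    ext x
    constructor
    · rintro ⟨c, hc, a, ha, rfl⟩
      exact ⟨c, hc, T a, ha, by simp [Set.mem_preimage, _root_.map_smul]⟩
    · rintro ⟨c, hc, b, hb, hcb⟩
      refine ⟨c, hc, T.symm b, by simpa using hb, ?_⟩
      apply T.injective
      rw [_root_.map_smul, LinearIsometryEquiv.apply_symm_apply, ← hcb]
  rw [h2]
  have h3 := (mpT T).map_eq
  have emb : MeasurableEmbedding (⇑T) := T.toHomeomorph.measurableEmbedding
  rw [← emb.map_apply, h3]

lemma integral_sphMap {n : ℕ} (T : EuclideanSpace ℝ (Fin n) ≃ₗᵢ[ℝ] EuclideanSpace ℝ (Fin n))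
    (f : sphere (0 : EuclideanSpace ℝ (Fin n)) 1 → ℝ) :
    ∫ x, f (sphMap T x) ∂ (volume : Measure (EuclideanSpace ℝ (Fin n))).toSphere
      = ∫ x, f x ∂ (volume : Measure (EuclideanSpace ℝ (Fin n))).toSphere := by
  conv_rhs => rw [← sphMap_map_toSphere T]
  rw [MeasureTheory.integral_map_equiv]
  rfl

section moments
variable {n : ℕ}

local notation "E'" => EuclideanSpace ℝ (Fin n)

lemma cont_coord (i : Fin n) :
    Continuous (fun Θ : sphere (0 : E') 1 => (Θ : E') i) :=
  (EuclideanSpace.proj i).continuous.comp continuous_subtype_val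

lemma integrable_cont (g : sphere (0 : E') 1 → ℝ) (hg : Continuous g) : Integrable g (volume : Measure E').toSphere := by
  refine hg.integrable_of_hasCompactSupport ?_
  exact IsCompact.of_isClosed_subset isCompact_univ (isClosed_tsupport g) (Set.subset_univ _)

lemma integrable_coordmul (i j : Fin n) :
    Integrable (fun Θ : sphere (0 : E') 1 => (Θ : E') i * (Θ : E') j) (volume : Measure E').toSphere :=
  integrable_cont _ ((cont_coord i).mul (cont_coord j))

lemma offdiag_moment {i j : Fin n} (h : i ≠ j) :
    ∫ Θ : sphere (0 : E') 1, (Θ : E') i * (Θ : E') j ∂(volume : Measure E').toSphere = 0 := by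
  classical
  set T : E' ≃ₗᵢ[ℝ] E' :=
    LinearIsometryEquiv.piLpCongrRight 2
      (fun k : Fin n => if k = i then LinearIsometryEquiv.neg ℝ else
        LinearIsometryEquiv.refl ℝ ℝ) with hT
  have key := integral_sphMap T (fun Θ => (Θ : E') i * (Θ : E') j)
  have hTi : ∀ x : E', (T x) i = - x i := by
    intro x; simp [hT, LinearIsometryEquiv.piLpCongrRight_apply]
  have hTj : ∀ x : E', (T x) j = x j := by
    intro x; simp [hT, LinearIsometryEquiv.piLpCongrRight_apply, h.symm]
  have : (fun Θ : sphere (0 : E') 1 => ((sphMap T Θ : E') i * (sphMap T Θ : E') j))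
      = fun Θ : sphere (0 : E') 1 => -((Θ : E') i * (Θ : E') j) := by
    funext Θ
    rw [sphMap_apply, hTi, hTj]
    ring
  rw [this, integral_neg] at key
  linarith

lemma diag_moment_eq (i j : Fin n) :
    ∫ Θ : sphere (0 : E') 1, (Θ : E') i * (Θ : E') i ∂(volume : Measure E').toSphere
      = ∫ Θ : sphere (0 : E') 1, (Θ : E') j * (Θ : E') j ∂(volume : Measure E').toSphere := by
  classical
  set T : E' ≃ₗᵢ[ℝ] E' :=
    LinearIsometryEquiv.piLpCongrLeft 2 ℝ ℝ (Equiv.swap i j) with hT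
  have key := integral_sphMap T (fun Θ => (Θ : E') i * (Θ : E') i)
  have hTi : ∀ x : E', (T x) i = x j := by
    intro x
    show x ((Equiv.swap i j).symm i) = x j
    rw [Equiv.symm_swap, Equiv.swap_apply_left]
  have : (fun Θ : sphere (0 : E') 1 => ((sphMap T Θ : E') i * (sphMap T Θ : E') i))
      = fun Θ : sphere (0 : E') 1 => (Θ : E') j * (Θ : E') j := by
    funext Θ
    rw [sphMap_apply, hTi]
  rw [this] at key
  exact key.symm

lemma sum_diag_moment :
    ∑ i : Fin n, ∫ Θ : sphere (0 : E') 1, (Θ : E') i * (Θ : E') i ∂(volume : Measure E').toSphere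
      = ((volume : Measure E').toSphere Set.univ).toReal := by
  rw [← integral_finset_sum _ (fun i _ => integrable_coordmul i i)]
  have : (fun Θ : sphere (0 : E') 1 => ∑ i : Fin n, (Θ : E') i * (Θ : E') i)
      = fun _ => (1 : ℝ) := by
    funext Θ
    have hΘ : ‖(Θ : E')‖ = 1 := by
      have := Θ.2
      simpa [mem_sphere_iff_norm] using this
    have h2 : ∑ i : Fin n, (Θ : E') i * (Θ : E') i = ‖(Θ : E')‖ ^ 2 := by
      rw [EuclideanSpace.norm_eq, Real.sq_sqrt (by positivity)]
      exact Finset.sum_congr rfl fun k _ => by rw [Real.norm_eq_abs, sq_abs, sq]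
    rw [h2, hΘ]; norm_num
  rw [this]
  simp
  exact Or.inl rfl

lemma diag_moment (i : Fin n) :
    ∫ Θ : sphere (0 : E') 1, (Θ : E') i * (Θ : E') i ∂(volume : Measure E').toSphere
      = ((volume : Measure E').toSphere Set.univ).toReal / n := by
  have hn : 0 < n := i.pos
  have hsum := sum_diag_moment (n := n)
  have hall : ∀ j : Fin n, ∫ Θ : sphere (0 : E') 1, (Θ : E') j * (Θ : E') j ∂(volume : Measure E').toSphere
      = ∫ Θ : sphere (0 : E') 1, (Θ : E') i * (Θ : E') i ∂(volume : Measure E').toSphere :=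
    fun j => diag_moment_eq j i
  rw [Finset.sum_congr rfl (fun j _ => hall j), Finset.sum_const, Finset.card_univ,
    Fintype.card_fin, nsmul_eq_mul] at hsum
  rw [eq_div_iff (by exact_mod_cast hn.ne' : (n:ℝ) ≠ 0)]
  linarith [hsum]

end moments

section key
variable {n : ℕ}
local notation "E'" => EuclideanSpace ℝ (Fin n)

lemma key_moment (M : Matrix (Fin n) (Fin n) ℝ) :
    ∫ Θ : sphere (0 : E') 1, (∑ i, ∑ j, M i j * ((Θ : E') i * (Θ : E') j))
        ∂(volume : Measure E').toSphere
      = ((volume : Measure E').toSphere Set.univ).toReal / n * M.trace := by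
  classical
  rw [integral_finset_sum _ (fun i _ => integrable_finset_sum _
    (fun j _ => (integrable_coordmul i j).const_mul (M i j)))]
  have h1 : ∀ i : Fin n, ∫ Θ : sphere (0 : E') 1,
      (∑ j, M i j * ((Θ : E') i * (Θ : E') j)) ∂(volume : Measure E').toSphere
      = M i i * (((volume : Measure E').toSphere Set.univ).toReal / n) := by
    intro i
    rw [integral_finset_sum _ (fun j _ => (integrable_coordmul i j).const_mul (M i j))]
    rw [Finset.sum_eq_single i]
    · rw [MeasureTheory.integral_const_mul, diag_moment]
    · intro j _ hji
      rw [MeasureTheory.integral_const_mul, offdiag_moment (Ne.symm hji), mul_zero]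
    · simp
  rw [Finset.sum_congr rfl (fun i _ => h1 i), ← Finset.sum_mul, Matrix.trace]
  simp [Matrix.diag]
  ring

lemma expand_pt {n : ℕ} (A B : Matrix (Fin n) (Fin n) ℝ) (e x : Fin n → ℝ) :
    (∑ k, (∑ i, A k i * x i) * (∑ j, B k j * x j))
      - (n : ℝ) * ((∑ i, x i * e i) * (∑ j, x j * e j))
    = ∑ i, ∑ j, ((∑ k, A k i * B k j) - n * (e i * e j)) * (x i * x j) := by
  have h1 : ∀ k, (∑ i, A k i * x i) * (∑ j, B k j * x j)
      = ∑ i, ∑ j, A k i * B k j * (x i * x j) := by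
    intro k
    rw [Finset.sum_mul_sum]
    exact Finset.sum_congr rfl fun i _ => Finset.sum_congr rfl fun j _ => by ring
  have h2 : (∑ i, x i * e i) * (∑ j, x j * e j)
      = ∑ i, ∑ j, (e i * e j) * (x i * x j) := by
    rw [Finset.sum_mul_sum]
    exact Finset.sum_congr rfl fun i _ => Finset.sum_congr rfl fun j _ => by ring
  rw [Finset.sum_congr rfl fun k _ => h1 k, h2, Finset.sum_comm]
  rw [Finset.mul_sum, ← Finset.sum_sub_distrib]
  refine Finset.sum_congr rfl fun i _ => ?_
  rw [Finset.sum_comm, Finset.mul_sum, ← Finset.sum_sub_distrib]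
  refine Finset.sum_congr rfl fun j _ => ?_
  rw [← Finset.sum_mul, sub_mul]
  ring

lemma ortho_rigid {n : ℕ} (R₁ R₂ : Matrix (Fin n) (Fin n) ℝ)
    (h1 : R₁ ∈ Matrix.orthogonalGroup (Fin n) ℝ)
    (h2 : R₂ ∈ Matrix.orthogonalGroup (Fin n) ℝ)
    (htrace : Matrix.trace (R₂ᵀ * R₁) = (n : ℝ)) : R₁ = R₂ := by
  classical
  rw [Matrix.mem_orthogonalGroup_iff] at h1 h2
  set A := R₂ᵀ * R₁ with hA
  have hAAt : A * Aᵀ = 1 := by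
    have h1' : R₁ * R₁ᵀ = 1 := h1
    have h2' : R₂ * R₂ᵀ = 1 := h2
    have h2'' : R₂ᵀ * R₂ = 1 := by
      exact mul_eq_one_comm.mp h2'
    calc A * Aᵀ = R₂ᵀ * (R₁ * R₁ᵀ) * R₂ := by
          simp [hA, Matrix.transpose_mul, Matrix.mul_assoc]
      _ = 1 := by rw [h1']; simp [h2'']
  have hrow : ∀ i, ∑ j, A i j * A i j = 1 := by
    intro i
    have := congrArg (fun M => M i i) hAAt
    simpa [Matrix.mul_apply, Matrix.one_apply] using this
  have hdiag_le : ∀ i, A i i ≤ 1 := by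
    intro i
    have hle : A i i * A i i ≤ ∑ j, A i j * A i j :=
      Finset.single_le_sum (fun j _ => mul_self_nonneg (A i j)) (Finset.mem_univ i)
    rw [hrow i] at hle
    nlinarith
  have htr' : ∑ i, A i i = (n : ℝ) := by
    have : Matrix.trace A = ∑ i, A i i := rfl
    rw [← this, htrace]
  have hdiag : ∀ i, A i i = 1 := by
    by_contra hc
    push_neg at hc
    obtain ⟨k, hk⟩ := hc
    have hlt : ∑ i, A i i < ∑ _i : Fin n, (1 : ℝ) :=
      Finset.sum_lt_sum (fun i _ => hdiag_le i)
        ⟨k, Finset.mem_univ k, lt_of_le_of_ne (hdiag_le k) hk⟩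
    rw [htr'] at hlt
    simp at hlt
  have hoff : ∀ i j, j ≠ i → A i j = 0 := by
    intro i j hji
    have hsplit := Finset.add_sum_erase Finset.univ (fun j => A i j * A i j) (Finset.mem_univ i)
    beta_reduce at hsplit
    rw [hrow i, hdiag i, one_mul] at hsplit
    have hzero : ∑ j ∈ Finset.univ.erase i, A i j * A i j = 0 := by linarith
    have := (Finset.sum_eq_zero_iff_of_nonneg
      (fun j _ => mul_self_nonneg (A i j))).mp hzero j
      (Finset.mem_erase.mpr ⟨hji, Finset.mem_univ j⟩)
    exact mul_self_eq_zero.mp this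
  have hA1 : A = 1 := by
    ext i j
    by_cases hij : i = j
    · subst hij; rw [hdiag i, Matrix.one_apply_eq]
    · rw [hoff i j (Ne.symm hij), Matrix.one_apply_ne hij]
  have h2' : R₂ * R₂ᵀ = 1 := h2
  calc R₁ = (R₂ * R₂ᵀ) * R₁ := by rw [h2', Matrix.one_mul]
    _ = R₂ * A := by rw [Matrix.mul_assoc]
    _ = R₂ := by rw [hA1, Matrix.mul_one]

end key

/-- for distinct `R₁, R₂ ∈ O(n)` fixing a common unit vector `e`,
`γ₁₂ := 2^{-n} ∫_{S^{n-1}} (R₁Θ·R₂Θ - n (Θ·e)²) dθ` equals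
`-(ω_n/2ⁿ)(2/n)(dim E₋ + Σᵢ(1 - cos θᵢ))` and is negative, where the block decomposition
data of `R₂⁻¹R₁` is encoded by the trace identity. -/
theorem stmt11 (n : ℕ) (hn : 2 ≤ n)
    (e : EuclideanSpace ℝ (Fin n)) (he : ‖e‖ = 1)
    (R₁ R₂ : Matrix (Fin n) (Fin n) ℝ)
    (hR₁ : R₁ ∈ Matrix.orthogonalGroup (Fin n) ℝ)
    (hR₂ : R₂ ∈ Matrix.orthogonalGroup (Fin n) ℝ)
    (hR₁e : Matrix.toEuclideanLin R₁ e = e)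
    (hR₂e : Matrix.toEuclideanLin R₂ e = e)
    (hne : R₁ ≠ R₂)
    (μ : Measure (sphere (0 : EuclideanSpace ℝ (Fin n)) 1))
    (hμ : μ = (volume : Measure (EuclideanSpace ℝ (Fin n))).toSphere)
    (ω : ℝ) (hω : ω = (μ Set.univ).toReal)
    (dplus dminus m : ℕ) (θ : Fin m → ℝ)
    (hθ : ∀ i, θ i ∈ Set.Ioo (0 : ℝ) Real.pi)
    (hdim : dplus + dminus + 2 * m = n)
    (htr : Matrix.trace (R₂⁻¹ * R₁) = (dplus : ℝ) - dminus + 2 * ∑ i, Real.cos (θ i))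
    (γ : ℝ)
    (hγ : γ = (2 : ℝ) ^ (-(n : ℤ)) *
      ∫ Θ : sphere (0 : EuclideanSpace ℝ (Fin n)) 1,
        ((inner ℝ (Matrix.toEuclideanLin R₁ (Θ : EuclideanSpace ℝ (Fin n)))
                (Matrix.toEuclideanLin R₂ (Θ : EuclideanSpace ℝ (Fin n))) : ℝ)
          - n * (inner ℝ (Θ : EuclideanSpace ℝ (Fin n)) e : ℝ)
              * (inner ℝ (Θ : EuclideanSpace ℝ (Fin n)) e : ℝ)) ∂μ) :
    γ = -(ω / 2 ^ n) * (2 / n) * ((dminus : ℝ) + ∑ i, (1 - Real.cos (θ i))) ∧ γ < 0 := by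
  classical
  subst hμ hω
  have hn0 : (0:ℝ) < n := by positivity
  -- R₂⁻¹ = R₂ᵀ
  have hR₂' : R₂ * R₂ᵀ = 1 := by
    have := Matrix.mem_orthogonalGroup_iff (Fin n) ℝ |>.mp hR₂
    exact this
  have hinv : R₂⁻¹ = R₂ᵀ := Matrix.inv_eq_right_inv hR₂'
  set N : Matrix (Fin n) (Fin n) ℝ :=
    Matrix.of (fun i j => (∑ k, R₁ k i * R₂ k j) - n * (e i * e j)) with hN
  -- pointwise identity
  have hpt : ∀ x : EuclideanSpace ℝ (Fin n),
      (inner ℝ (Matrix.toEuclideanLin R₁ x) (Matrix.toEuclideanLin R₂ x) : ℝ)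
        - n * (inner ℝ x e : ℝ) * (inner ℝ x e : ℝ)
      = ∑ i, ∑ j, N i j * (x i * x j) := by
    intro x
    have e1 : (inner ℝ (Matrix.toEuclideanLin R₁ x) (Matrix.toEuclideanLin R₂ x) : ℝ)
        = ∑ k, (∑ i, R₁ k i * x i) * (∑ j, R₂ k j * x j) := by
      rw [PiLp.inner_apply]
      refine Finset.sum_congr rfl fun k _ => ?_
      simp [Matrix.toEuclideanLin_apply, Matrix.mulVec, dotProduct,
        RCLike.inner_apply]
      ring
    have e2 : (inner ℝ x e : ℝ) = ∑ i, x i * e i := by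
      rw [PiLp.inner_apply]
      simp [RCLike.inner_apply]
      exact Finset.sum_congr rfl fun i _ => mul_comm _ _
    rw [e1, e2, mul_assoc, expand_pt]
    rfl
  have hint : (∫ Θ : sphere (0 : EuclideanSpace ℝ (Fin n)) 1,
        ((inner ℝ (Matrix.toEuclideanLin R₁ (Θ : EuclideanSpace ℝ (Fin n)))
                (Matrix.toEuclideanLin R₂ (Θ : EuclideanSpace ℝ (Fin n))) : ℝ)
          - n * (inner ℝ (Θ : EuclideanSpace ℝ (Fin n)) e : ℝ)
              * (inner ℝ (Θ : EuclideanSpace ℝ (Fin n)) e : ℝ))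
        ∂(volume : Measure (EuclideanSpace ℝ (Fin n))).toSphere)
      = (((volume : Measure (EuclideanSpace ℝ (Fin n))).toSphere Set.univ).toReal / n)
          * N.trace := by
    rw [show (fun Θ : sphere (0 : EuclideanSpace ℝ (Fin n)) 1 =>
        ((inner ℝ (Matrix.toEuclideanLin R₁ (Θ : EuclideanSpace ℝ (Fin n)))
                (Matrix.toEuclideanLin R₂ (Θ : EuclideanSpace ℝ (Fin n))) : ℝ)
          - n * (inner ℝ (Θ : EuclideanSpace ℝ (Fin n)) e : ℝ)
              * (inner ℝ (Θ : EuclideanSpace ℝ (Fin n)) e : ℝ)))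
        = fun Θ : sphere (0 : EuclideanSpace ℝ (Fin n)) 1 =>
            ∑ i, ∑ j, N i j * ((Θ : EuclideanSpace ℝ (Fin n)) i
              * (Θ : EuclideanSpace ℝ (Fin n)) j) from funext fun Θ => hpt _]
    exact key_moment N
  -- trace of N
  have hsum_e : ∑ i, e i * e i = 1 := by
    have h2 : ∑ i, e i * e i = ‖e‖ ^ 2 := by
      rw [EuclideanSpace.norm_eq, Real.sq_sqrt (by positivity)]
      exact Finset.sum_congr rfl fun k _ => by rw [Real.norm_eq_abs, sq_abs, sq]
    rw [h2, he]; norm_num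
  have htrN : N.trace = Matrix.trace (R₂⁻¹ * R₁) - n := by
    have : N.trace = (∑ i, ∑ k, R₁ k i * R₂ k i) - n * ∑ i, e i * e i := by
      rw [Matrix.trace]
      simp only [Matrix.diag, hN, Matrix.of_apply, Finset.mul_sum]
      rw [Finset.sum_sub_distrib]
    rw [this, hsum_e, mul_one, hinv]
    congr 1
    rw [Matrix.trace]
    simp only [Matrix.diag, Matrix.mul_apply, Matrix.transpose_apply]
    exact Finset.sum_congr rfl fun i _ => Finset.sum_congr rfl fun k _ => by ring
  -- numeric identity
  set S : ℝ := (dminus : ℝ) + ∑ i, (1 - Real.cos (θ i)) with hS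
  have hsum_cos : ∑ i, (1 - Real.cos (θ i)) = (m : ℝ) - ∑ i, Real.cos (θ i) := by
    rw [Finset.sum_sub_distrib]
    simp
  have hdim' : (dplus : ℝ) = (n : ℝ) - dminus - 2 * m := by
    have := congrArg (Nat.cast : ℕ → ℝ) hdim
    push_cast at this
    linarith
  have htrval : Matrix.trace (R₂⁻¹ * R₁) - n = -2 * S := by
    rw [htr, hS, hsum_cos, hdim']
    ring
  set ω := (((volume : Measure (EuclideanSpace ℝ (Fin n))).toSphere) Set.univ).toReal with hω
  have hγ' : γ = -(ω / 2 ^ n) * (2 / n) * S := by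
    rw [hγ, hint, htrN, htrval]
    rw [_root_.zpow_neg, zpow_natCast]
    field_simp
  -- positivity of ω
  have hω_pos : 0 < ω := by
    rw [hω]
    apply ENNReal.toReal_pos
    · rw [Measure.toSphere_apply_univ]
      refine mul_ne_zero ?_ ?_
      · simp [finrank_euclideanSpace_fin]
        omega
      · exact (measure_ball_pos volume 0 one_pos).ne'
    · exact measure_ne_top _ _
  -- positivity of S
  have hS_pos : 0 < S := by
    rcases Nat.eq_zero_or_pos dminus with hd | hd
    · rcases Nat.eq_zero_or_pos m with hm | hm
      · exfalso
        apply hne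
        apply ortho_rigid R₁ R₂ hR₁ hR₂
        rw [← hinv, htr]
        subst hm hd
        simp at hdim ⊢
        exact_mod_cast congrArg (Nat.cast : ℕ → ℝ) hdim
      · rw [hS, hd]
        push_cast
        rw [zero_add]
        refine Finset.sum_pos (fun i _ => ?_) ?_
        · have hi := hθ i
          have : Real.cos (θ i) < 1 := by
            have := Real.cos_lt_cos_of_nonneg_of_le_pi le_rfl hi.2.le hi.1
            simpa using this
          linarith
        · exact Finset.univ_nonempty_iff.mpr ⟨⟨0, hm⟩⟩
    · have hsum_nonneg : 0 ≤ ∑ i, (1 - Real.cos (θ i)) :=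
        Finset.sum_nonneg fun i _ => by linarith [Real.cos_le_one (θ i)]
      have : (1:ℝ) ≤ dminus := by exact_mod_cast hd
      rw [hS]; linarith
  refine ⟨hγ', ?_⟩
  rw [hγ']
  have h2n : (0:ℝ) < 2 ^ n := by positivity
  have : 0 < (ω / 2 ^ n) * (2 / n) * S := by positivity
  linarith
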